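/- The braid group B_3 is isomorphic to the universal central extension data given by ⟨a, b | a² = b³⟩; i.e., B_3 has presentation ⟨a, b | a² = b³⟩ via a = σ1σ2σ1, b = σ1σ2. -/

import Mathlib

/-- The braid relation for `B₃ = ⟨σ1, σ2 | σ1σ2σ1 = σ2σ1σ2⟩`. -/
def braidRel3 : Set (FreeGroup (Fin 2)) :=
  {FreeGroup.of 0 * FreeGroup.of 1 * FreeGroup.of 0 *
    (FreeGroup.of 1 * FreeGroup.of 0 * FreeGroup.of 1)⁻¹}

/-- The braid group on 3 strands. -/
def B3 : Type := PresentedGroup braidRel3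

noncomputable instance : Group B3 := by unfold B3; infer_instance

/-- `σ1`, `σ2` in `B₃`. -/
noncomputable def sigma1 : B3 := PresentedGroup.of 0
noncomputable def sigma2 : B3 := PresentedGroup.of 1


/-- The relation `a² = b³` on two generators. -/
def torusRel : Set (FreeGroup (Fin 2)) :=
  {FreeGroup.of 0 ^ 2 * (FreeGroup.of 1 ^ 3)⁻¹}

noncomputable abbrev Ta : PresentedGroup torusRel := PresentedGroup.of 0
noncomputable abbrev Tb : PresentedGroup torusRel := PresentedGroup.of 1

lemma torus_rel_holds : Ta ^ 2 = Tb ^ 3 := by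
  have h : ((QuotientGroup.mk (FreeGroup.of 0 ^ 2 * (FreeGroup.of 1 ^ 3)⁻¹) :
      PresentedGroup torusRel)) = 1 := by
    rw [QuotientGroup.eq_one_iff]
    exact Subgroup.subset_normalClosure rfl
  rw [QuotientGroup.mk_mul, QuotientGroup.mk_inv, mul_inv_eq_one] at h
  simp at h
  exact h

lemma braid_rel_holds : sigma1 * sigma2 * sigma1 = sigma2 * sigma1 * sigma2 := by
  have h : ((QuotientGroup.mk (FreeGroup.of 0 * FreeGroup.of 1 * FreeGroup.of 0 *
      (FreeGroup.of 1 * FreeGroup.of 0 * FreeGroup.of 1)⁻¹) : PresentedGroup braidRel3)) = 1 := by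
    rw [QuotientGroup.eq_one_iff]
    exact Subgroup.subset_normalClosure rfl
  rw [QuotientGroup.mk_mul, QuotientGroup.mk_inv, mul_inv_eq_one] at h
  simp at h
  exact h

/-- forward map on generators: σ1 ↦ b⁻¹a, σ2 ↦ a⁻¹b². -/
noncomputable def fwdFun : Fin 2 → PresentedGroup torusRel :=
  ![Tb⁻¹ * Ta, Ta⁻¹ * Tb ^ 2]

lemma fwd_rel : ∀ r ∈ braidRel3, FreeGroup.lift fwdFun r = 1 := by
  intro r hr
  rcases hr with rfl
  have h := torus_rel_holds
  simp only [map_mul, map_inv, FreeGroup.lift_apply_of, fwdFun]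
  simp only [Matrix.cons_val_zero, Matrix.cons_val_one, Matrix.head_cons]
  rw [mul_inv_eq_one]
  have e1 : Tb⁻¹ * Ta * (Ta⁻¹ * Tb ^ 2) * (Tb⁻¹ * Ta) = Ta := by group
  have e2 : Ta⁻¹ * Tb ^ 2 * (Tb⁻¹ * Ta) * (Ta⁻¹ * Tb ^ 2) = Ta⁻¹ * Tb ^ 3 := by group
  rw [e1, e2, ← h]
  group

noncomputable def fwd : B3 →* PresentedGroup torusRel := PresentedGroup.toGroup fwd_rel

/-- backward map: a ↦ σ1σ2σ1, b ↦ σ1σ2. -/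
noncomputable def bwdFun : Fin 2 → B3 :=
  ![sigma1 * sigma2 * sigma1, sigma1 * sigma2]

lemma bwd_rel : ∀ r ∈ torusRel, FreeGroup.lift bwdFun r = 1 := by
  intro r hr
  rcases hr with rfl
  have h := braid_rel_holds
  simp only [map_mul, map_inv, map_pow, FreeGroup.lift_apply_of, bwdFun]
  simp only [Matrix.cons_val_zero, Matrix.cons_val_one, Matrix.head_cons]
  rw [mul_inv_eq_one]
  calc (sigma1 * sigma2 * sigma1) ^ 2
      = (sigma1 * sigma2 * sigma1) * (sigma1 * sigma2 * sigma1) := pow_two _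
    _ = (sigma1 * sigma2 * sigma1) * (sigma2 * sigma1 * sigma2) := by rw [h]
    _ = (sigma1 * sigma2) ^ 3 := by simp [pow_succ, mul_assoc]

noncomputable def bwd : PresentedGroup torusRel →* B3 := PresentedGroup.toGroup bwd_rel

@[simp] lemma fwd_of (x : Fin 2) : fwd (PresentedGroup.of x) = fwdFun x :=
  PresentedGroup.toGroup.of fwd_rel

@[simp] lemma bwd_of (x : Fin 2) : bwd (PresentedGroup.of x) = bwdFun x :=
  PresentedGroup.toGroup.of bwd_rel

lemma fwd_a : fwd (sigma1 * sigma2 * sigma1) = Ta := by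
  have h := torus_rel_holds
  rw [map_mul, map_mul, show fwd sigma1 = fwdFun 0 from fwd_of 0, show fwd sigma2 = fwdFun 1 from fwd_of 1]
  simp only [fwdFun, Matrix.cons_val_zero, Matrix.cons_val_one, Matrix.head_cons]
  have e1 : Tb⁻¹ * Ta * (Ta⁻¹ * Tb ^ 2) * (Tb⁻¹ * Ta) = Ta := by group
  exact e1

lemma fwd_b : fwd (sigma1 * sigma2) = Tb := by
  have h := torus_rel_holds
  rw [map_mul, show fwd sigma1 = fwdFun 0 from fwd_of 0, show fwd sigma2 = fwdFun 1 from fwd_of 1]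
  simp only [fwdFun, Matrix.cons_val_zero, Matrix.cons_val_one, Matrix.head_cons]
  have e1 : Tb⁻¹ * Ta * (Ta⁻¹ * Tb ^ 2) = Tb := by group
  exact e1

lemma fwd_bwd : bwd.comp fwd = MonoidHom.id B3 := by
  have key : ∀ x : Fin 2, (bwd.comp fwd) (PresentedGroup.of x) =
      (MonoidHom.id (PresentedGroup braidRel3)) (PresentedGroup.of x) := by
    intro x
    have f1 : fwd sigma1 = Tb⁻¹ * Ta := fwd_of 0
    have f2 : fwd sigma2 = Ta⁻¹ * Tb ^ 2 := fwd_of 1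
    have g1 : bwd Ta = sigma1 * sigma2 * sigma1 := bwd_of 0
    have g2 : bwd Tb = sigma1 * sigma2 := bwd_of 1
    fin_cases x
    · show bwd (fwd sigma1) = sigma1
      rw [f1, map_mul, map_inv, g1, g2]
      group
    · show bwd (fwd sigma2) = sigma2
      rw [f2, map_mul, map_inv, map_pow, g1, g2, pow_two]
      group
  exact PresentedGroup.ext key

lemma bwd_fwd : fwd.comp bwd = MonoidHom.id (PresentedGroup torusRel) := by
  have key : ∀ x : Fin 2, (fwd.comp bwd) (PresentedGroup.of x) =
      (MonoidHom.id (PresentedGroup torusRel)) (PresentedGroup.of x) := by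
    intro x
    fin_cases x
    · simpa [bwdFun] using fwd_a
    · simpa [bwdFun] using fwd_b
  exact PresentedGroup.ext key

/-- `B₃` has the presentation `⟨a, b | a² = b³⟩` via `a = σ1σ2σ1`,
`b = σ1σ2`. -/
theorem B3_iso_torusKnotGroup :
    ∃ e : B3 ≃* PresentedGroup torusRel,
      e (sigma1 * sigma2 * sigma1) = PresentedGroup.of 0 ∧
      e (sigma1 * sigma2) = PresentedGroup.of 1 := by
  exact ⟨MonoidHom.toMulEquiv fwd bwd fwd_bwd bwd_fwd, fwd_a, fwd_b⟩
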